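/- There exists a decomposition on the vertex set $\{0,\dots,11\}$ with parts $G_i = \{i, i+3, i+6, i+9\}$ for $i = 0,1,2$, of all edges of the complete tripartite graph except those within the set $S = \{0,1,2\}$, into 9 edge-disjoint copies of $K_4-e$; explicitly the copies $[5,4,0-3]$, $[7,8,0-6]$, $[10,11,0-9]$, $[5,6,1-10]$, $[3,11,1-7]$, $[8,9,1-4]$, $[7,9,2-5]$, $[3,10,2-8]$, $[4,6,2-11]$ work. -/

import Mathlib

open SimpleGraph Finset

/-- `K₄ - e`: the complete graph on `{0,1,2,3}` minus the edge `{2,3}`.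
In the block notation `[a,b,c-d]`, `a = 0`, `b = 1`, `c = 2`, `d = 3`. -/
def K4e : SimpleGraph (Fin 4) where
  Adj x y := x ≠ y ∧ ¬(x = 2 ∧ y = 3) ∧ ¬(x = 3 ∧ y = 2)
  symm := by
    constructor
    intro x y h
    exact ⟨h.1.symm, fun hc => h.2.2 ⟨hc.2, hc.1⟩, fun hc => h.2.1 ⟨hc.2, hc.1⟩⟩
  loopless := ⟨fun x h => h.1 rfl⟩

instance : DecidableRel K4e.Adj :=
  fun x y => inferInstanceAs (Decidable (x ≠ y ∧ ¬(x = 2 ∧ y = 3) ∧ ¬(x = 3 ∧ y = 2)))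

/-- The edge set of the copy of `K₄ - e` with vertices `f 0, f 1, f 2, f 3`. -/
def copyEdges {V : Type*} (f : Fin 4 → V) : Set (Sym2 V) :=
  Sym2.map f '' K4e.edgeSet

/-- `B` is a packing of `H` by edge-disjoint copies of `K₄ - e`. -/
def IsK4ePacking {V : Type*} (H : SimpleGraph V) (B : Finset (Fin 4 → V)) : Prop :=
  (∀ f ∈ B, Function.Injective f) ∧
  (∀ f ∈ B, copyEdges f ⊆ H.edgeSet) ∧
  (∀ f ∈ B, ∀ g ∈ B, f ≠ g → Disjoint (copyEdges f) (copyEdges g))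

/-- The leave of a packing: the edges of `H` covered by no copy. -/
def leave {V : Type*} (H : SimpleGraph V) (B : Finset (Fin 4 → V)) : Set (Sym2 V) :=
  H.edgeSet \ ⋃ f ∈ B, copyEdges f

/-- `B` is a decomposition of `H` into edge-disjoint copies of `K₄ - e`. -/
def IsK4eDecomp {V : Type*} (H : SimpleGraph V) (B : Finset (Fin 4 → V)) : Prop :=
  IsK4ePacking H B ∧ ∀ e ∈ H.edgeSet, ∃ f ∈ B, e ∈ copyEdges f

/-- The complete tripartite graph with parts `{i, i+3, i+6, i+9}`, `0 ≤ i ≤ 2`, on `Fin 12`. -/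
def K3x4 : SimpleGraph (Fin 12) where
  Adj x y := x.val % 3 ≠ y.val % 3
  symm := ⟨fun _ _ h => h.symm⟩
  loopless := ⟨fun _ h => h rfl⟩

/-- `K_{3(4)}` minus the edges within the hole `S = {0,1,2}`. -/
def K3x4holed : SimpleGraph (Fin 12) where
  Adj x y := x.val % 3 ≠ y.val % 3 ∧ ¬(x.val < 3 ∧ y.val < 3)
  symm := ⟨fun _ _ h => ⟨h.1.symm, fun hc => h.2 ⟨hc.2, hc.1⟩⟩⟩
  loopless := ⟨fun _ h => h.1 rfl⟩


instance : DecidableRel K3x4holed.Adj :=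
  fun x y => inferInstanceAs (Decidable (x.val % 3 ≠ y.val % 3 ∧ ¬(x.val < 3 ∧ y.val < 3)))

lemma mem_copyEdges {V : Type*} (f : Fin 4 → V) (a b : V) :
    s(a, b) ∈ copyEdges f ↔ ∃ i j, K4e.Adj i j ∧ f i = a ∧ f j = b := by
  constructor
  · rintro ⟨x, hx, hmap⟩
    induction x using Sym2.ind with
    | _ i j =>
      rw [Sym2.map_pair_eq, Sym2.eq_iff] at hmap
      rcases hmap with ⟨h1, h2⟩ | ⟨h1, h2⟩
      · exact ⟨i, j, hx, h1, h2⟩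
      · exact ⟨j, i, K4e.adj_symm hx, h2, h1⟩
  · rintro ⟨i, j, hij, hi, hj⟩
    exact ⟨s(i, j), hij, by rw [Sym2.map_pair_eq, hi, hj]⟩

lemma copyEdges_subset_iff {V : Type*} (f : Fin 4 → V) (H : SimpleGraph V) :
    copyEdges f ⊆ H.edgeSet ↔ ∀ i j, K4e.Adj i j → H.Adj (f i) (f j) := by
  constructor
  · intro h i j hij
    exact h ((mem_copyEdges f _ _).mpr ⟨i, j, hij, rfl, rfl⟩)
  · rintro h e ⟨x, hx, rfl⟩
    induction x using Sym2.ind with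
    | _ i j => rw [Sym2.map_pair_eq]; exact h i j hx

lemma copyEdges_disjoint_iff {V : Type*} (f g : Fin 4 → V) :
    Disjoint (copyEdges f) (copyEdges g) ↔
      ∀ i j k l, K4e.Adj i j → K4e.Adj k l →
        ¬(f i = g k ∧ f j = g l) ∧ ¬(f i = g l ∧ f j = g k) := by
  rw [Set.disjoint_left]
  constructor
  · intro h i j k l hij hkl
    refine ⟨fun ⟨h1, h2⟩ => ?_, fun ⟨h1, h2⟩ => ?_⟩
    · exact h ((mem_copyEdges f _ _).mpr ⟨i, j, hij, rfl, rfl⟩)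
        ((mem_copyEdges g _ _).mpr ⟨k, l, hkl, h1.symm, h2.symm⟩)
    · exact h ((mem_copyEdges f _ _).mpr ⟨i, j, hij, rfl, rfl⟩)
        ((mem_copyEdges g _ _).mpr ⟨l, k, K4e.adj_symm hkl, h1.symm, h2.symm⟩)
  · intro h a haf hag
    induction a using Sym2.ind with
    | _ a b =>
      rw [mem_copyEdges] at haf hag
      obtain ⟨i, j, hij, hia, hjb⟩ := haf
      obtain ⟨k, l, hkl, hka, hlb⟩ := hag
      exact (h i j k l hij hkl).1 ⟨hia.trans hka.symm, hjb.trans hlb.symm⟩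

theorem stmt11 :
    ∃ B : Finset (Fin 4 → Fin 12),
      B = {![5, 4, 0, 3], ![7, 8, 0, 6], ![10, 11, 0, 9], ![5, 6, 1, 10], ![3, 11, 1, 7],
           ![8, 9, 1, 4], ![7, 9, 2, 5], ![3, 10, 2, 8], ![4, 6, 2, 11]} ∧
      B.card = 9 ∧ IsK4eDecomp K3x4holed B := by
  refine ⟨_, rfl, rfl, ⟨?_, ?_, ?_⟩, ?_⟩
  · intro f hf
    fin_cases hf <;> decide
  · intro f hf
    rw [copyEdges_subset_iff]
    fin_cases hf <;> decide
  · intro f hf g hg hne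
    rw [copyEdges_disjoint_iff]
    revert hne
    fin_cases hf <;> fin_cases hg <;> decide
  · have key : ∀ a b : Fin 12, K3x4holed.Adj a b →
        ∃ f ∈ [![5, 4, 0, 3], ![7, 8, 0, 6], ![10, 11, 0, 9], ![5, 6, 1, 10], ![3, 11, 1, 7],
            ![8, 9, 1, 4], ![7, 9, 2, 5], ![3, 10, 2, 8], ![4, 6, 2, 11]],
          ∃ i j, K4e.Adj i j ∧ f i = a ∧ f j = b := by decide
    intro e he
    induction e using Sym2.ind with
    | _ a b =>
      obtain ⟨f, hfL, i, j, hij, hi, hj⟩ := key a b he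
      refine ⟨f, ?_, (mem_copyEdges f a b).mpr ⟨i, j, hij, hi, hj⟩⟩
      simp only [List.mem_cons, List.not_mem_nil, or_false] at hfL
      simp only [Finset.mem_insert, Finset.mem_singleton]
      tauto
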